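/- For any principal submatrix: if K is positive semidefinite indexed by D and A ⊆ B ⊆ D, then det(K_B + σ²I) ≥ σ^{2(|B|−|A|)} · det(K_A + σ²I). -/

import Mathlib

set_option maxHeartbeats 1000000

open Matrix

variable {D : Type*} [Fintype D] [DecidableEq D]

/-- Principal submatrix of `K` indexed by the finite subset `Z`. -/
def gram (K : Matrix D D ℝ) (Z : Finset D) : Matrix Z Z ℝ :=
  K.submatrix (fun i => (i : D)) (fun j => (j : D))

lemma gram_posSemidef (K : Matrix D D ℝ) (hK : K.PosSemidef) (Z : Finset D) :
    (gram K Z).PosSemidef := hK.submatrix _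

lemma smul_one_posDef {n : Type*} [Fintype n] [DecidableEq n] {σ2 : ℝ} (hσ : 0 < σ2) :
    (σ2 • (1 : Matrix n n ℝ)).PosDef := by
  rw [smul_one_eq_diagonal]
  exact Matrix.PosDef.diagonal (fun _ => hσ)

lemma fromBlocks_zero_psd {m n : Type*} [Fintype m] [Fintype n] [DecidableEq m] [DecidableEq n]
    {P : Matrix m m ℝ} (hP : P.PosSemidef) :
    (fromBlocks P 0 0 (0 : Matrix n n ℝ)).PosSemidef := by
  open scoped MatrixOrder in
  obtain ⟨S, hS⟩ := CStarAlgebra.nonneg_iff_eq_star_mul_self.mp hP.nonneg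
  have h : fromBlocks P 0 0 (0 : Matrix n n ℝ)
      = (fromBlocks S 0 0 0)ᴴ * (fromBlocks S 0 0 0) := by
    rw [fromBlocks_conjTranspose, fromBlocks_multiply]
    simp only [conjTranspose_zero, Matrix.mul_zero, Matrix.zero_mul, add_zero, zero_add]
    rw [hS]; rfl
  rw [h]
  exact posSemidef_conjTranspose_mul_self _

lemma det_step (K : Matrix D D ℝ) (hK : K.PosSemidef) {σ2 : ℝ} (hσ : 0 < σ2)
    (Z : Finset D) {x : D} (hx : x ∉ Z) :
    σ2 * (gram K Z + σ2 • 1).det ≤ (gram K (insert x Z) + σ2 • 1).det := by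
  classical
  set e : {i // i ∈ insert x Z} ≃ ({i // i ∈ Z} ⊕ Unit) :=
    (Finset.subtypeInsertEquivOption hx).trans (Equiv.optionEquivSumPUnit _) with he
  set N : Matrix ({i // i ∈ Z} ⊕ Unit) ({i // i ∈ Z} ⊕ Unit) ℝ :=
    (gram K (insert x Z)).submatrix e.symm e.symm with hNdef
  have hN : N.PosSemidef := (gram_posSemidef K hK _).submatrix _
  have hA11 : N.toBlocks₁₁ = gram K Z := by
    ext i j
    simp [hNdef, he, toBlocks₁₁, _root_.gram, Finset.subtypeInsertEquivOption]
  have hC : N.toBlocks₂₁ = N.toBlocks₁₂ᴴ := by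
    ext i j
    simp only [toBlocks₂₁, toBlocks₁₂, conjTranspose_apply, of_apply, star_trivial]
    conv_lhs => rw [← hN.1]
    simp
  have hNsplit : N = fromBlocks N.toBlocks₁₁ N.toBlocks₁₂ N.toBlocks₁₂ᴴ N.toBlocks₂₂ := by
    rw [← hC]; exact (fromBlocks_toBlocks N).symm
  set Bm := N.toBlocks₁₂
  set Dm := N.toBlocks₂₂
  -- the shifted top-left block is positive definite
  have hPD : (gram K Z + σ2 • 1).PosDef :=
    Matrix.PosDef.posSemidef_add (gram_posSemidef K hK Z) (smul_one_posDef hσ)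
  haveI : Invertible (gram K Z + σ2 • 1) :=
    invertibleOfIsUnitDet _ (isUnit_iff_ne_zero.mpr hPD.det_pos.ne')
  -- the big matrix with shift only in the top-left block is PSD
  have hbig : (fromBlocks (gram K Z + σ2 • 1) Bm Bmᴴ Dm).PosSemidef := by
    have h2 : fromBlocks (gram K Z + σ2 • 1) Bm Bmᴴ Dm
        = N + fromBlocks (σ2 • 1) 0 0 (0 : Matrix PUnit PUnit ℝ) := by
      conv_rhs => rw [hNsplit]
      rw [fromBlocks_add, hA11]
      congr 1 <;> simp [add_comm]
    rw [h2]
    exact hN.add (fromBlocks_zero_psd (smul_one_posDef hσ).posSemidef)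
  have hSchur : (Dm - Bmᴴ * (gram K Z + σ2 • 1)⁻¹ * Bm).PosSemidef :=
    (Matrix.PosDef.fromBlocks₁₁ Bm Dm hPD).mp hbig
  -- rewrite the full determinant via the block decomposition
  have hdet : (gram K (insert x Z) + σ2 • 1).det
      = (gram K Z + σ2 • 1).det
        * ((Dm + σ2 • 1) - Bmᴴ * (gram K Z + σ2 • 1)⁻¹ * Bm).det := by
    rw [← Matrix.det_submatrix_equiv_self e.symm]
    have hM0 : (gram K (insert x Z) + σ2 • 1).submatrix ⇑e.symm ⇑e.symm = N + σ2 • 1 := by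
      ext i j
      simp [hNdef, Matrix.submatrix_apply, Matrix.add_apply, Matrix.smul_apply,
        Matrix.one_apply, EmbeddingLike.apply_eq_iff_eq]
    have hM' : (gram K (insert x Z) + σ2 • 1).submatrix ⇑e.symm ⇑e.symm
        = fromBlocks (gram K Z + σ2 • 1) Bm Bmᴴ (Dm + σ2 • 1) := by
      rw [hM0]
      conv_lhs => rw [hNsplit]
      rw [← fromBlocks_one, fromBlocks_smul, fromBlocks_add, hA11]
      simp
    rw [hM', Matrix.det_fromBlocks₁₁, invOf_eq_nonsing_inv]
  rw [hdet]
  have hentry : σ2 ≤ ((Dm + σ2 • 1) - Bmᴴ * (gram K Z + σ2 • 1)⁻¹ * Bm).det := by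
    rw [Matrix.det_unique]
    have h0 : 0 ≤ (Dm - Bmᴴ * (gram K Z + σ2 • 1)⁻¹ * Bm) default default := by
      have := hSchur.dotProduct_mulVec_nonneg (fun _ => 1)
      simpa [dotProduct, mulVec] using this
    simp only [Matrix.sub_apply, Matrix.add_apply, Matrix.smul_apply, Matrix.one_apply_eq,
      smul_eq_mul, mul_one] at h0 ⊢
    linarith
  nlinarith [mul_le_mul_of_nonneg_left hentry hPD.det_pos.le, hPD.det_pos]

lemma det_union_lower_bound (K : Matrix D D ℝ) (hK : K.PosSemidef)
    {σ2 : ℝ} (hσ : 0 < σ2) (A : Finset D) (s : Finset D) (hs : Disjoint A s) :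
    σ2 ^ s.card * (gram K A + σ2 • 1).det ≤ (gram K (A ∪ s) + σ2 • 1).det := by
  classical
  induction s using Finset.induction_on with
  | empty => rw [Finset.union_empty]; simp
  | @insert x s hxs ih =>
    have hds : Disjoint A s := hs.mono_right (Finset.subset_insert x s)
    have hxA : x ∉ A := fun h =>
      (Finset.disjoint_left.mp hs h (Finset.mem_insert_self x s))
    have hxAs : x ∉ A ∪ s := by simp [hxA, hxs]
    have h1 := ih hds
    have h2 := det_step K hK hσ (A ∪ s) hxAs
    rw [Finset.union_insert, Finset.card_insert_of_notMem hxs, pow_succ]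
    calc σ2 ^ s.card * σ2 * (gram K A + σ2 • 1).det
        = σ2 * (σ2 ^ s.card * (gram K A + σ2 • 1).det) := by ring
      _ ≤ σ2 * (gram K (A ∪ s) + σ2 • 1).det := by
          exact mul_le_mul_of_nonneg_left h1 hσ.le
      _ ≤ (gram K (insert x (A ∪ s)) + σ2 • 1).det := h2

/-- For nested principal submatrices `A ⊆ B` of a positive semidefinite `K`,
`det(K_B + σ²I) ≥ σ^{2(|B|−|A|)} · det(K_A + σ²I)`. -/
theorem det_nested_principal_lower_bound (K : Matrix D D ℝ) (hK : K.PosSemidef)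
    (σ2 : ℝ) (hσ : 0 < σ2) (A B : Finset D) (hAB : A ⊆ B) :
    σ2 ^ (B.card - A.card) * (gram K A + σ2 • 1).det ≤ (gram K B + σ2 • 1).det := by
  classical
  have hd : Disjoint A (B \ A) := Finset.disjoint_sdiff
  have := det_union_lower_bound K hK hσ A (B \ A) hd
  rw [Finset.union_sdiff_of_subset hAB, Finset.card_sdiff_of_subset hAB] at this
  exact this
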